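/- Let s ≥ 3 and r ≥ 1 be integers and a > 0 real. Then for h ∈ ℝ, there exist j, j′ ∈ {1, …, s} with j ≠ j′ and X_j(h) = X_{j′}(h) if and only if r·h is an integer multiple of π. That is, crossings in the planar braid diagram occur exactly at heights h with r·h ≡ 0 mod π. -/

import Mathlib

open Real

/-- Combinatorial helper: for `s ≥ 3` and any integer `k`, there are distinct
`j, j' ∈ [1, s]` with `k + j + j' - 2` a multiple of `s`. -/
lemma lemniscate_aux (s : ℕ) (hs : 3 ≤ s) (k : ℤ) :
    ∃ j ∈ Finset.Icc 1 s, ∃ j' ∈ Finset.Icc 1 s, j ≠ j' ∧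
      ∃ q : ℤ, k + (j : ℤ) + (j' : ℤ) - 2 = q * s := by
  have hs0 : (0 : ℤ) < (s : ℤ) := by omega
  set m := (2 - k) % (s : ℤ) with hm
  have hm0 : 0 ≤ m := Int.emod_nonneg _ (by omega)
  have hms : m < (s : ℤ) := Int.emod_lt_of_pos _ hs0
  set t := (2 - k) / (s : ℤ) with ht
  have hdiv : 2 - k = (s : ℤ) * t + m := (Int.mul_ediv_add_emod (2 - k) s).symm
  rcases lt_trichotomy m 0 with hlt | heq0 | hpos
  · omega
  · -- m = 0 : take j = 1, j' = s - 1
    refine ⟨1, by simp [Finset.mem_Icc]; omega, s - 1, by simp [Finset.mem_Icc]; omega,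
      by omega, 1 - t, ?_⟩
    rw [Nat.cast_sub (by omega : 1 ≤ s)]
    push_cast
    linear_combination -hdiv - heq0
  · rcases eq_or_lt_of_le (show (1 : ℤ) ≤ m by omega) with heq1 | hge2
    · -- m = 1 : take j = 1, j' = s
      refine ⟨1, by simp [Finset.mem_Icc]; omega, s, by simp [Finset.mem_Icc]; omega,
        by omega, 1 - t, ?_⟩
      push_cast
      linear_combination -hdiv + heq1
    · -- m ≥ 2 : take j = s, j' = m.toNat
      refine ⟨s, by simp [Finset.mem_Icc]; omega, m.toNat, ?_, ?_, 1 - t, ?_⟩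
      · simp only [Finset.mem_Icc]
        omega
      · omega
      · rw [Int.toNat_of_nonneg hm0]
        push_cast
        linear_combination -hdiv

theorem lemniscate_crossing_heights (s r : ℕ) (hs : 3 ≤ s) (hr : 1 ≤ r)
    (a : ℝ) (ha : 0 < a) (h : ℝ) :
    (∃ j ∈ Finset.Icc 1 s, ∃ j' ∈ Finset.Icc 1 s, j ≠ j' ∧
        a * Real.cos ((r * h + 2 * Real.pi * ((j : ℝ) - 1)) / s) =
          a * Real.cos ((r * h + 2 * Real.pi * ((j' : ℝ) - 1)) / s)) ↔
      ∃ k : ℤ, (r : ℝ) * h = k * Real.pi := by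
  have hsR : (0 : ℝ) < (s : ℝ) := by positivity
  have hsne : (s : ℝ) ≠ 0 := hsR.ne'
  constructor
  · rintro ⟨j, hj, j', hj', hne, heq⟩
    simp only [Finset.mem_Icc] at hj hj'
    have heq' := mul_left_cancel₀ ha.ne' heq
    rw [Real.cos_eq_cos_iff] at heq'
    obtain ⟨k, hk | hk⟩ := heq'
    · -- impossible: would force j' - j = k * s
      exfalso
      have h2 : 2 * π * ((j' : ℝ) - j) = 2 * π * ((k : ℝ) * s) := by
        field_simp at hk
        linear_combination hk
      have hR : ((j' : ℝ) - j) = (k : ℝ) * s :=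
        mul_left_cancel₀ (by positivity : (0:ℝ) < 2 * π).ne' h2
      have hZ : ((j' : ℤ) - j) = k * s := by exact_mod_cast hR
      have hb1 : (1 : ℤ) ≤ j := by exact_mod_cast hj.1
      have hb2 : (j : ℤ) ≤ s := by exact_mod_cast hj.2
      have hb3 : (1 : ℤ) ≤ j' := by exact_mod_cast hj'.1
      have hb4 : (j' : ℤ) ≤ s := by exact_mod_cast hj'.2
      have hneZ : (j : ℤ) ≠ j' := by exact_mod_cast fun h' => hne (Nat.cast_injective h')
      have hsZ : (3 : ℤ) ≤ s := by exact_mod_cast hs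
      rcases lt_trichotomy k 0 with hk0 | hk0 | hk0
      · have : k * (s : ℤ) ≤ -s := by nlinarith
        omega
      · subst hk0; omega
      · have : (s : ℤ) ≤ k * s := by nlinarith
        omega
    · -- sum case: r h = (k s - j - j' + 2) π
      refine ⟨k * s - j - j' + 2, ?_⟩
      rw [eq_sub_iff_add_eq, ← add_div, div_eq_iff hsne] at hk
      push_cast
      linear_combination hk / 2
  · rintro ⟨k, hrh⟩
    obtain ⟨j, hj, j', hj', hne, q, hq⟩ := lemniscate_aux s hs k
    refine ⟨j, hj, j', hj', hne, ?_⟩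
    refine congrArg (a * ·) (Real.cos_eq_cos_iff.mpr ⟨q, Or.inr ?_⟩)
    have hqR : (k : ℝ) + j + j' - 2 = q * s := by exact_mod_cast hq
    rw [eq_sub_iff_add_eq, ← add_div, div_eq_iff hsne]
    linear_combination 2 * Real.pi * hqR + 2 * hrh
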